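/- Let F : ℒⁿ → Fin be a special functor and let H be the directed graph whose edge set is ⨿_{i=0}^{n} F(i,i), vertex set ⨿_{i=1}^{n} F(i−1,i), with incidence maps induced by F(i,i) → F(i,i+1) (inputs) and F(i,i) → F(i−1,i) (outputs). Then H is connected (as an undirected graph) if and only if F(0,n) is a one-element set. -/

import Mathlib

/-!
STATEMENT 4: Let `F : ℒⁿ → Fin` be a special functor and let `H` be the directed graph
with edge set `⨿_{i=0}^{n} F(i,i)`, vertex set `⨿_{i=1}^{n} F(i−1,i)`, and incidence
given by the maps `F(i,i) → F(i,i+1)` (inputs) and `F(i,i) → F(i−1,i)` (outputs).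
Then `H` is connected (as an undirected graph) if and only if `F(0,n)` is a
one-element set.
-/

open CategoryTheory

/-- The poset ℒⁿ. -/
@[ext]
structure LObjN (n : ℕ) where
  i : ℕ
  j : ℕ
  hij : i ≤ j
  hn : j ≤ n

instance (n : ℕ) : PartialOrder (LObjN n) where
  le a b := b.i ≤ a.i ∧ a.j ≤ b.j
  le_refl a := ⟨le_refl _, le_refl _⟩
  le_trans a b c h₁ h₂ := ⟨le_trans h₂.1 h₁.1, le_trans h₁.2 h₂.2⟩
  le_antisymm a b h₁ h₂ := by
    ext
    · exact le_antisymm h₂.1 h₁.1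
    · exact le_antisymm h₁.2 h₂.2

/-- Special (pushout-preserving) functors `ℒⁿ → Fin`. -/
def Special {n : ℕ} (F : LObjN n ⥤ Type) : Prop :=
  ∀ ⦃a b c d : LObjN n⦄ (f : a ⟶ b) (g : a ⟶ c) (h : b ⟶ d) (k : c ⟶ d),
    IsPushout f g h k → IsPushout (F.map f) (F.map g) (F.map h) (F.map k)

/-- The object `(k,k)` of ℒⁿ: edges at level `k`. -/
def eObj (n : ℕ) (k : ℕ) (hk : k ≤ n) : LObjN n := ⟨k, k, le_refl k, hk⟩

/-- The object `(k,k+1)` of ℒⁿ: vertices at level `k+1`. -/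
def vObj (n : ℕ) (k : ℕ) (hk : k + 1 ≤ n) : LObjN n := ⟨k, k + 1, Nat.le_succ k, hk⟩

/-- The combined set of edges and vertices of the directed graph associated to the level
graph underlying `F`. -/
def El (n : ℕ) (F : LObjN n ⥤ Type) : Type :=
  (Σ k : {k : ℕ // k ≤ n}, F.obj (eObj n k.1 k.2)) ⊕
  (Σ k : {k : ℕ // k + 1 ≤ n}, F.obj (vObj n k.1 k.2))

/-- Incidence in the underlying directed graph: the edge `e ∈ F(i,i)` is incident to the
vertex `v ∈ F(k,k+1)` precisely when there is a morphism `(i,i) → (k,k+1)` in ℒⁿ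
(i.e. `k ≤ i ≤ k+1`) carrying `e` to `v`. -/
def Adj (n : ℕ) (F : LObjN n ⥤ Type) : El n F → El n F → Prop
  | Sum.inl ⟨i, e⟩, Sum.inr ⟨k, v⟩ =>
      ∃ h : eObj n i.1 i.2 ≤ vObj n k.1 k.2, F.map (homOfLE h) e = v
  | _, _ => False

/-- The underlying graph of `F` is connected: it is nonempty and any two of its
edges/vertices are joined by a zig-zag of incidences. -/
def Conn (n : ℕ) (F : LObjN n ⥤ Type) : Prop :=
  Nonempty (El n F) ∧
    ∀ x y : El n F, Relation.ReflTransGen (fun a b => Adj n F a b ∨ Adj n F b a) x y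

open Relation

section Stmt4Aux

variable {n : ℕ}

lemma LObjN.le_of {a b : LObjN n} (h1 : b.i ≤ a.i) (h2 : a.j ≤ b.j) : a ≤ b := ⟨h1, h2⟩

/-- the object (0,j). -/
def topO (n j : ℕ) (hj : j ≤ n) : LObjN n := ⟨0, j, Nat.zero_le j, hj⟩

def topN (n : ℕ) : LObjN n := ⟨0, n, Nat.zero_le n, le_refl n⟩

lemma eObj_le_topO {i j : ℕ} (hin : i ≤ n) (hj : j ≤ n) (hij : i ≤ j) :
    eObj n i hin ≤ topO n j hj := LObjN.le_of (Nat.zero_le _) hij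

lemma vObj_le_topO {k j : ℕ} (hkn : k + 1 ≤ n) (hj : j ≤ n) (hkj : k + 1 ≤ j) :
    vObj n k hkn ≤ topO n j hj := LObjN.le_of (Nat.zero_le _) hkj

lemma topO_le_topN {j : ℕ} (hj : j ≤ n) : topO n j hj ≤ topN n :=
  LObjN.le_of (le_refl 0) hj

/-- The map sending every edge/vertex to its image in `F(0,n)`. -/
def piF (F : LObjN n ⥤ Type) : El n F → F.obj (topN n)
  | Sum.inl ⟨i, e⟩ => F.map (homOfLE (LObjN.le_of (Nat.zero_le _) i.2)) e
  | Sum.inr ⟨k, v⟩ => F.map (homOfLE (LObjN.le_of (Nat.zero_le _) k.2)) v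

lemma mapEq (F : LObjN n ⥤ Type) {a b : LObjN n} (f g : a ⟶ b) (x : F.obj a) :
    F.map f x = F.map g x := by rw [Subsingleton.elim f g]

lemma mapMap (F : LObjN n ⥤ Type) {a b c : LObjN n} (h1 : a ≤ b) (h2 : b ≤ c) (h3 : a ≤ c)
    (x : F.obj a) :
    F.map (homOfLE h2) (F.map (homOfLE h1) x) = F.map (homOfLE h3) x := by
  rw [← FunctorToTypes.map_comp_apply]; exact mapEq F _ _ x

lemma piF_adj (F : LObjN n ⥤ Type) {x y : El n F} (h : Adj n F x y) : piF F x = piF F y := by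
  match x, y with
  | Sum.inl ⟨i, e⟩, Sum.inr ⟨k, v⟩ =>
    obtain ⟨hle, hv⟩ := h
    subst hv
    exact (mapMap F hle _ _ e).symm
  | Sum.inl _, Sum.inl _ => exact h.elim
  | Sum.inr _, Sum.inl _ => exact h.elim
  | Sum.inr _, Sum.inr _ => exact h.elim

def relF (F : LObjN n ⥤ Type) : El n F → El n F → Prop :=
  fun a b => Adj n F a b ∨ Adj n F b a

lemma piF_rtg (F : LObjN n ⥤ Type) {x y : El n F} (h : ReflTransGen (relF F) x y) :
    piF F x = piF F y := by
  induction h with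
  | refl => rfl
  | tail _ hr ih =>
    exact ih.trans (hr.elim (fun h' => piF_adj F h') (fun h' => (piF_adj F h').symm))

instance connSetoid (F : LObjN n ⥤ Type) : Setoid (El n F) :=
  ⟨ReflTransGen (relF F),
    ⟨fun _ => ReflTransGen.refl,
     fun h => (@ReflTransGen.symmetric _ _ ⟨fun _ _ hh => hh.symm⟩).symm _ _ h,
     fun h1 h2 => h1.trans h2⟩⟩

lemma isPushout_LObjN {a b c d : LObjN n} (hab : a ≤ b) (hac : a ≤ c) (hbd : b ≤ d)
    (hcd : c ≤ d) (hmin : ∀ e : LObjN n, b ≤ e → c ≤ e → d ≤ e) :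
    IsPushout (homOfLE hab) (homOfLE hac) (homOfLE hbd) (homOfLE hcd) := by
  have w : CommSq (homOfLE hab) (homOfLE hac) (homOfLE hbd) (homOfLE hcd) :=
    ⟨Subsingleton.elim _ _⟩
  exact IsPushout.of_isColimit' w
    (Limits.PushoutCocone.IsColimit.mk w.w
      (fun s => homOfLE (hmin s.pt (leOfHom s.inl) (leOfHom s.inr)))
      (fun s => Subsingleton.elim _ _)
      (fun s => Subsingleton.elim _ _)
      (fun s m _ _ => Subsingleton.elim _ _))

lemma jointSurj {Z B C D : Type} {f : Z ⟶ B} {g : Z ⟶ C} {h : B ⟶ D} {k : C ⟶ D}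
    (PO : IsPushout f g h k) (t : D) : (∃ b, h b = t) ∨ (∃ c, k c = t) := by
  let u : D ⟶ (Prop : Type) := TypeCat.ofHom fun x => (∃ b, h b = x) ∨ (∃ c, k c = x)
  have hu : u = TypeCat.ofHom fun _ => True := by
    apply PO.hom_ext
    · ext b; exact iff_of_true (Or.inl ⟨b, rfl⟩ : (∃ b', h b' = h b) ∨ ∃ c, k c = h b) trivial
    · ext c; exact iff_of_true (Or.inr ⟨c, rfl⟩ : (∃ b, h b = k c) ∨ ∃ c', k c' = k c) trivial
  exact of_eq_true (ConcreteCategory.congr_hom hu t)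

lemma key (F : LObjN n ⥤ Type) (hspec : Special F) (j : ℕ) (hj : j ≤ n) :
    ∃ q : F.obj (topO n j hj) → Quotient (connSetoid F),
      (∀ (i : ℕ) (hin : i ≤ n) (hij : i ≤ j) (e : F.obj (eObj n i hin)),
          q (F.map (homOfLE (eObj_le_topO hin hj hij)) e) = ⟦Sum.inl ⟨⟨i, hin⟩, e⟩⟧) ∧
      (∀ (k : ℕ) (hkn : k + 1 ≤ n) (hkj : k + 1 ≤ j) (v : F.obj (vObj n k hkn)),
          q (F.map (homOfLE (vObj_le_topO hkn hj hkj)) v) = ⟦Sum.inr ⟨⟨k, hkn⟩, v⟩⟧) ∧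
      (∀ t : F.obj (topO n j hj), ∃ x : El n F,
          piF F x = F.map (homOfLE (topO_le_topN hj)) t) := by
  induction j with
  | zero =>
    refine ⟨fun t => ⟦Sum.inl ⟨⟨0, Nat.zero_le n⟩, t⟩⟧, ?_, ?_, ?_⟩
    · intro i hin hij e
      obtain rfl : i = 0 := Nat.le_zero.mp hij
      have he : F.map (homOfLE (eObj_le_topO hin hj hij)) e = e := by
        have : homOfLE (eObj_le_topO (n := n) hin hj hij) = 𝟙 (eObj n 0 hin) :=
          Subsingleton.elim _ _
        exact (mapEq F _ _ e).trans (FunctorToTypes.map_id_apply F e)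
      exact congrArg (fun z => (⟦Sum.inl ⟨⟨0, hin⟩, z⟩⟧ : Quotient (connSetoid F))) he
    · intro k hkn hkj v; omega
    · intro t
      refine ⟨Sum.inl ⟨⟨0, Nat.zero_le n⟩, t⟩, ?_⟩
      exact mapEq F _ _ t
  | succ j ih =>
    have hjn : j ≤ n := Nat.le_of_succ_le hj
    obtain ⟨q, hE, hV, hA⟩ := ih hjn
    have hab : eObj n j hjn ≤ topO n j hjn := eObj_le_topO hjn hjn (le_refl j)
    have hac : eObj n j hjn ≤ vObj n j hj := LObjN.le_of (le_refl j) (Nat.le_succ j)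
    have hbd : topO n j hjn ≤ topO n (j + 1) hj := LObjN.le_of (le_refl 0) (Nat.le_succ j)
    have hcd : vObj n j hj ≤ topO n (j + 1) hj := LObjN.le_of (Nat.zero_le j) (le_refl (j + 1))
    have POT : IsPushout (F.map (homOfLE hab)) (F.map (homOfLE hac))
        (F.map (homOfLE hbd)) (F.map (homOfLE hcd)) :=
      hspec _ _ _ _ (isPushout_LObjN hab hac hbd hcd (fun e h1 h2 => ⟨h1.1, h2.2⟩))
    have w : F.map (homOfLE hab) ≫ TypeCat.ofHom q =
        F.map (homOfLE hac) ≫ TypeCat.ofHom (fun v => (⟦Sum.inr ⟨⟨j, hj⟩, v⟩⟧ : Quotient (connSetoid F))) := by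
      ext z
      show q (F.map (homOfLE hab) z) = ⟦Sum.inr ⟨⟨j, hj⟩, F.map (homOfLE hac) z⟩⟧
      refine (hE j hjn (le_refl j) z).trans ?_
      exact Quotient.sound (ReflTransGen.single (Or.inl ⟨hac, rfl⟩))
    set q' : F.obj (topO n (j + 1) hj) → Quotient (connSetoid F) :=
      fun x => POT.desc (TypeCat.ofHom q) (TypeCat.ofHom fun v => ⟦Sum.inr ⟨⟨j, hj⟩, v⟩⟧) w x with hq'
    have hinl : ∀ s, q' (F.map (homOfLE hbd) s) = q s := fun s =>
      ConcreteCategory.congr_hom (POT.inl_desc _ _ w) s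
    have hinr : ∀ v : F.obj (vObj n j hj),
        q' (F.map (homOfLE hcd) v) = ⟦Sum.inr ⟨⟨j, hj⟩, v⟩⟧ := fun v =>
      ConcreteCategory.congr_hom (POT.inr_desc _ _ w) v
    refine ⟨q', ?_, ?_, ?_⟩
    · intro i hin hij e
      by_cases hij' : i ≤ j
      · rw [← mapMap F (eObj_le_topO hin hjn hij') hbd (eObj_le_topO hin hj hij) e,
          hinl]
        exact hE i hin hij' e
      · obtain rfl : i = j + 1 := le_antisymm hij (by omega)
        have hev : eObj n (j + 1) hin ≤ vObj n j hj :=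
          LObjN.le_of (Nat.le_succ j) (le_refl (j + 1))
        rw [← mapMap F hev hcd (eObj_le_topO hin hj hij) e, hinr]
        exact Quotient.sound (ReflTransGen.single (Or.inr ⟨hev, rfl⟩))
    · intro k hkn hkj v
      by_cases hkj' : k + 1 ≤ j
      · rw [← mapMap F (vObj_le_topO hkn hjn hkj') hbd (vObj_le_topO hkn hj hkj) v,
          hinl]
        exact hV k hkn hkj' v
      · obtain rfl : k = j := by omega
        exact hinr v
    · intro t
      rcases jointSurj POT t with ⟨s, hs⟩ | ⟨v, hv⟩
      · obtain ⟨x, hx⟩ := hA s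
        refine ⟨x, ?_⟩
        rw [← hs, mapMap F hbd (topO_le_topN hj) (topO_le_topN hjn) s]
        exact hx
      · refine ⟨Sum.inr ⟨⟨j, hj⟩, v⟩, ?_⟩
        rw [← hv]
        exact (mapMap F hcd (topO_le_topN hj) (LObjN.le_of (Nat.zero_le j) hj) v).symm

end Stmt4Aux

theorem stmt4 (n : ℕ) (F : LObjN n ⥤ Type) (hfin : ∀ a : LObjN n, Finite (F.obj a))
    (hspec : Special F) :
    Conn n F ↔ ∃ z : F.obj ⟨0, n, Nat.zero_le n, le_refl n⟩,
      ∀ y : F.obj ⟨0, n, Nat.zero_le n, le_refl n⟩, y = z := by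
  constructor
  · rintro ⟨⟨x₀⟩, hconn⟩
    refine ⟨piF F x₀, fun y => ?_⟩
    obtain ⟨q, hE, hV, hA⟩ := key F hspec n (le_refl n)
    obtain ⟨x, hx⟩ := hA y
    have hy : piF F x = y := by
      rw [hx]
      have : homOfLE (topO_le_topN (n := n) (le_refl n)) = 𝟙 (topN n) :=
        Subsingleton.elim _ _
      rw [this]
      exact FunctorToTypes.map_id_apply F y
    rw [← hy]
    exact piF_rtg F (hconn x x₀)
  · rintro ⟨z, hz⟩
    obtain ⟨q, hE, hV, hA⟩ := key F hspec n (le_refl n)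
    have hq : ∀ x : El n F, q (piF F x) = ⟦x⟧ := by
      rintro (⟨⟨i, hin⟩, e⟩ | ⟨⟨k, hkn⟩, v⟩)
      · exact hE i hin hin e
      · exact hV k hkn hkn v
    obtain ⟨x₀, hx₀⟩ := hA z
    refine ⟨⟨x₀⟩, fun x y => ?_⟩
    have h1 : q (piF F x) = q (piF F y) := by
      rw [hz (piF F x), hz (piF F y)]
    rw [hq x, hq y] at h1
    exact Quotient.exact h1
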